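/- Let A be a finite nonempty set of actions, let ζ : A → ℝ be the expected-prediction value function (EAP), let H : A → ℝ be the fitness-weighted average heuristic (FAH) with V_min ≤ H(a) ≤ V_max for every a ∈ A, and let κ ≥ 0 be the heuristic weight. Let a* be an action maximizing ζ over A (the optimal greedy action) and let ã be an action maximizing the heuristic-augmented value ξ(a) = κ·H(a) + ζ(a) over A (the greedy action with heuristics). Then the EAP error satisfies ζ(a*) − ζ(ã) ≤ κ·(V_max − V_min). -/
import Mathlib


/-- Theorem 1 of the paper: the EAP error of the heuristic-augmented greedy
policy relative to the optimal greedy policy is bounded by `κ * (Vmax - Vmin)`. -/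
theorem eap_error_upper_bound
    {A : Type*} [Fintype A] [Nonempty A]
    (ζ H : A → ℝ) (Vmin Vmax κ : ℝ)
    (hκ : 0 ≤ κ)
    (hbound : ∀ a : A, Vmin ≤ H a ∧ H a ≤ Vmax)
    (astar atilde : A)
    (hstar : ∀ a : A, ζ a ≤ ζ astar)
    (htilde : ∀ a : A, κ * H a + ζ a ≤ κ * H atilde + ζ atilde) :
    ζ astar - ζ atilde ≤ κ * (Vmax - Vmin) := by
  have h1 := htilde astar
  have h2 := (hbound astar).1
  have h3 := (hbound atilde).2
  nlinarith [mul_le_mul_of_nonneg_left h2 hκ, mul_le_mul_of_nonneg_left h3 hκ]
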